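/- Let Z be standard normal, X_z = (Z - z conditioned on Z > z), and m(z) = E[X_z]. Then the rescaled variables X_z / m(z) converge in distribution as z → ∞ to the exponential random variable with mean 1. -/

import Mathlib

open MeasureTheory Set Filter Topology

/-- The density on `(0,∞)` of `X_z = (Z - z | Z > z)` for a standard normal `Z`. -/
noncomputable def condDens (z x : ℝ) : ℝ :=
  Real.exp (-(x + z) ^ 2 / 2) / (∫ t in Set.Ioi z, Real.exp (-t ^ 2 / 2))

/-- The conditional mean overshoot `m z = E[X_z]`. -/
noncomputable def condMean (z : ℝ) : ℝ :=
  Real.exp (-z ^ 2 / 2) / (∫ t in Set.Ioi z, Real.exp (-t ^ 2 / 2)) - z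

noncomputable def Sg (z : ℝ) : ℝ := ∫ t in Set.Ioi z, Real.exp (-t ^ 2 / 2)

lemma integrableOn_phi (z : ℝ) :
    IntegrableOn (fun t : ℝ => Real.exp (-t ^ 2 / 2)) (Ioi z) := by
  have h := integrable_exp_neg_mul_sq (show (0:ℝ) < 1/2 by norm_num)
  have e : (fun t : ℝ => Real.exp (-t ^ 2 / 2)) = fun t : ℝ => Real.exp (-(1/2) * t ^ 2) := by
    funext t; ring_nf
  rw [e]
  exact h.integrableOn

lemma phi_tendsto_zero :
    Tendsto (fun t : ℝ => Real.exp (-t ^ 2 / 2)) atTop (𝓝 0) := by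
  apply Real.tendsto_exp_atBot.comp
  have h : Tendsto (fun t : ℝ => t ^ 2 / 2) atTop atTop :=
    (tendsto_pow_atTop (two_ne_zero)).atTop_div_const (by norm_num)
  simpa [neg_div] using tendsto_neg_atBot_iff.mpr h

lemma hasDerivAt_phi (t : ℝ) :
    HasDerivAt (fun t : ℝ => Real.exp (-t ^ 2 / 2)) (Real.exp (-t ^ 2 / 2) * (-t)) t := by
  have h1 : HasDerivAt (fun t : ℝ => -t ^ 2 / 2) (-t) t := by
    have := ((hasDerivAt_pow 2 t)).neg.div_const 2
    refine this.congr_deriv ?_; push_cast; ring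
  exact h1.exp

lemma hasDerivAt_g1 {t : ℝ} (ht : t ≠ 0) :
    HasDerivAt (fun t : ℝ => Real.exp (-t ^ 2 / 2) * (1/t - 1/t^3))
      (Real.exp (-t ^ 2 / 2) * (3/t^4 - 1)) t := by
  have h1 : HasDerivAt (fun t : ℝ => 1/t) (-(1/t^2)) t := by
    simpa [one_div] using (hasDerivAt_inv ht)
  have h2 : HasDerivAt (fun t : ℝ => 1/t^3) (-(3/t^4)) t := by
    have h := ((hasDerivAt_pow 3 t).inv (pow_ne_zero 3 ht))
    have e : -(↑3 * t ^ (3 - 1)) / (t ^ 3) ^ 2 = -(3/t^4) := by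
      field_simp
    simpa [one_div, e, Pi.inv_def] using h
  have := (hasDerivAt_phi t).mul (h1.sub h2)
  refine this.congr_deriv ?_
  simp only [Pi.sub_apply, Pi.add_apply]
  field_simp
  ring

lemma hasDerivAt_g2 {t : ℝ} (ht : t ≠ 0) :
    HasDerivAt (fun t : ℝ => Real.exp (-t ^ 2 / 2) * (1/t - 1/t^3 + 3/t^5))
      (-(Real.exp (-t ^ 2 / 2) * (1 + 15/t^6))) t := by
  have h1 : HasDerivAt (fun t : ℝ => 1/t) (-(1/t^2)) t := by
    simpa [one_div] using (hasDerivAt_inv ht)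
  have h2 : HasDerivAt (fun t : ℝ => 1/t^3) (-(3/t^4)) t := by
    have h := ((hasDerivAt_pow 3 t).inv (pow_ne_zero 3 ht))
    have e : -(↑3 * t ^ (3 - 1)) / (t ^ 3) ^ 2 = -(3/t^4) := by
      field_simp
    simpa [one_div, e, Pi.inv_def] using h
  have h3 : HasDerivAt (fun t : ℝ => 3/t^5) (-(15/t^6)) t := by
    have h := ((hasDerivAt_pow 5 t).inv (pow_ne_zero 5 ht)).const_mul (3:ℝ)
    refine h.congr_deriv ?_
    field_simp
    ring
  have := (hasDerivAt_phi t).mul ((h1.sub h2).add h3)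
  refine this.congr_deriv ?_
  simp only [Pi.sub_apply, Pi.add_apply]
  field_simp
  ring

lemma tendsto_inv_pow_zero (k : ℕ) (hk : k ≠ 0) :
    Tendsto (fun t : ℝ => 1/t^k) atTop (𝓝 0) := by
  have h := (tendsto_pow_atTop (α := ℝ) hk).inv_tendsto_atTop
  refine h.congr (fun t => ?_)
  simp [one_div]

lemma g1_tendsto_zero :
    Tendsto (fun t : ℝ => Real.exp (-t ^ 2 / 2) * (1/t - 1/t^3)) atTop (𝓝 0) := by
  have h := phi_tendsto_zero.mul ((tendsto_inv_pow_zero 1 one_ne_zero).sub (tendsto_inv_pow_zero 3 three_ne_zero))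
  convert h using 2 <;> norm_num

lemma g2_tendsto_zero :
    Tendsto (fun t : ℝ => Real.exp (-t ^ 2 / 2) * (1/t - 1/t^3 + 3/t^5)) atTop (𝓝 0) := by
  have := phi_tendsto_zero.mul (((tendsto_inv_pow_zero 1 one_ne_zero).sub
    (tendsto_inv_pow_zero 3 three_ne_zero)).add ((tendsto_inv_pow_zero 5 (by norm_num)).const_mul 3))
  convert this using 2 <;> norm_num [div_eq_mul_inv]

lemma aux_cont_on {z : ℝ} (hz : 2 ≤ z) (c1 c2 : ℝ) (k : ℕ) :
    ContinuousOn (fun t : ℝ => Real.exp (-t ^ 2 / 2) * (c1 + c2/t^k)) (Ioi z) := by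
  apply ContinuousOn.mul (by fun_prop)
  apply ContinuousOn.add continuousOn_const
  apply ContinuousOn.div continuousOn_const (by fun_prop)
  intro t ht
  have h2 := mem_Ioi.mp ht
  exact pow_ne_zero _ (by nlinarith)

lemma integrableOn_aux {z : ℝ} (hz : 2 ≤ z) (c1 c2 : ℝ) (k : ℕ)
    (hb : ∀ t : ℝ, 2 ≤ t → |c1 + c2 / t ^ k| ≤ 2) :
    IntegrableOn (fun t : ℝ => Real.exp (-t ^ 2 / 2) * (c1 + c2 / t ^ k)) (Ioi z) := by
  have hint : IntegrableOn (fun t : ℝ => 2 * Real.exp (-t ^ 2 / 2)) (Ioi z) :=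
    (integrableOn_phi z).const_mul 2
  refine Integrable.mono' hint
    ((aux_cont_on hz c1 c2 k).aestronglyMeasurable measurableSet_Ioi) ?_
  filter_upwards [ae_restrict_mem measurableSet_Ioi] with t ht
  have h2t : 2 ≤ t := le_trans hz (le_of_lt (mem_Ioi.mp ht))
  rw [Real.norm_eq_abs, abs_mul, abs_of_pos (Real.exp_pos _)]
  have h := mul_le_mul_of_nonneg_left (hb t h2t) (Real.exp_nonneg (-t ^ 2 / 2))
  linarith

lemma bound4 : ∀ t : ℝ, 2 ≤ t → |(-1 : ℝ) + 3 / t ^ 4| ≤ 2 := by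
  intro t ht
  have h16 : (16:ℝ) ≤ t ^ 4 := by
    calc (16:ℝ) = 2 ^ 4 := by norm_num
    _ ≤ t ^ 4 := pow_le_pow_left₀ (by norm_num) ht 4
  have hpos : (0:ℝ) < t ^ 4 := by positivity
  have h1 : 3 / t ^ 4 ≤ 3 / 16 := by
    apply div_le_div_of_nonneg_left (by norm_num) (by norm_num) h16
  have h2 : (0:ℝ) ≤ 3 / t ^ 4 := by positivity
  rw [abs_le]; constructor <;> linarith

lemma bound6 : ∀ t : ℝ, 2 ≤ t → |(-1 : ℝ) + (-15) / t ^ 6| ≤ 2 := by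
  intro t ht
  have h64 : (64:ℝ) ≤ t ^ 6 := by
    calc (64:ℝ) = 2 ^ 6 := by norm_num
    _ ≤ t ^ 6 := pow_le_pow_left₀ (by norm_num) ht 6
  have hpos : (0:ℝ) < t ^ 6 := by positivity
  have h1 : 15 / t ^ 6 ≤ 15 / 64 := by
    apply div_le_div_of_nonneg_left (by norm_num) (by norm_num) h64
  have h2 : (0:ℝ) ≤ 15 / t ^ 6 := by positivity
  have e : (-1 : ℝ) + (-15) / t ^ 6 = -(1 + 15 / t ^ 6) := by ring
  rw [e, abs_neg, abs_le]; constructor <;> linarith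

lemma integral_d1 {z : ℝ} (hz : 2 ≤ z) :
    ∫ t in Ioi z, Real.exp (-t ^ 2 / 2) * (-1 + 3 / t ^ 4) =
      0 - Real.exp (-z ^ 2 / 2) * (1/z - 1/z^3) := by
  apply integral_Ioi_of_hasDerivAt_of_tendsto' (f := fun t => Real.exp (-t ^ 2 / 2) * (1/t - 1/t^3))
  · intro t ht
    have h2t : (2:ℝ) ≤ t := le_trans hz ht
    have := hasDerivAt_g1 (show t ≠ 0 by positivity)
    exact this.congr_deriv (by ring)
  · exact integrableOn_aux hz (-1) 3 4 bound4
  · exact g1_tendsto_zero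

lemma integral_d2 {z : ℝ} (hz : 2 ≤ z) :
    ∫ t in Ioi z, Real.exp (-t ^ 2 / 2) * (-1 + (-15) / t ^ 6) =
      0 - Real.exp (-z ^ 2 / 2) * (1/z - 1/z^3 + 3/z^5) := by
  apply integral_Ioi_of_hasDerivAt_of_tendsto'
    (f := fun t => Real.exp (-t ^ 2 / 2) * (1/t - 1/t^3 + 3/t^5))
  · intro t ht
    have h2t : (2:ℝ) ≤ t := le_trans hz ht
    have := hasDerivAt_g2 (show t ≠ 0 by positivity)
    exact this.congr_deriv (by ring)
  · exact integrableOn_aux hz (-1) (-15) 6 bound6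
  · exact g2_tendsto_zero

lemma g1_le_Sg {z : ℝ} (hz : 2 ≤ z) :
    Real.exp (-z ^ 2 / 2) * (1/z - 1/z^3) ≤ Sg z := by
  have key := integral_d1 hz
  have e : Real.exp (-z ^ 2 / 2) * (1/z - 1/z^3)
      = ∫ t in Ioi z, Real.exp (-t ^ 2 / 2) * (1 + (-3) / t ^ 4) := by
    have : (fun t : ℝ => Real.exp (-t ^ 2 / 2) * (1 + (-3) / t ^ 4))
        = fun t : ℝ => -(Real.exp (-t ^ 2 / 2) * (-1 + 3 / t ^ 4)) := by
      funext t; ring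
    rw [this, integral_neg, key]; ring
  rw [e]
  apply setIntegral_mono_on
  · exact integrableOn_aux hz 1 (-3) 4 (by
      intro t ht
      have := bound4 t ht
      have e2 : (1:ℝ) + (-3)/t^4 = -((-1) + 3/t^4) := by ring
      rw [e2, abs_neg]; exact this)
  · exact integrableOn_phi z
  · exact measurableSet_Ioi
  · intro t ht
    have h2t : (2:ℝ) ≤ t := le_trans hz (le_of_lt (mem_Ioi.mp ht))
    have hpos : (0:ℝ) < t ^ 4 := by positivity
    nlinarith [Real.exp_nonneg (-t ^ 2 / 2), div_nonneg (show (0:ℝ) ≤ 3 by norm_num) (le_of_lt hpos),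
      mul_le_mul_of_nonneg_left (show (1:ℝ) + (-3)/t^4 ≤ 1 by
        have : (0:ℝ) < 3 / t^4 := by positivity
        linarith [show (-3)/t^4 = -(3/t^4) from by ring]) (Real.exp_nonneg (-t ^ 2 / 2))]

lemma Sg_le_g2 {z : ℝ} (hz : 2 ≤ z) :
    Sg z ≤ Real.exp (-z ^ 2 / 2) * (1/z - 1/z^3 + 3/z^5) := by
  have key := integral_d2 hz
  have e : Real.exp (-z ^ 2 / 2) * (1/z - 1/z^3 + 3/z^5)
      = ∫ t in Ioi z, Real.exp (-t ^ 2 / 2) * (1 + 15 / t ^ 6) := by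
    have : (fun t : ℝ => Real.exp (-t ^ 2 / 2) * (1 + 15 / t ^ 6))
        = fun t : ℝ => -(Real.exp (-t ^ 2 / 2) * (-1 + (-15) / t ^ 6)) := by
      funext t; ring
    rw [this, integral_neg, key]; ring
  rw [e]
  apply setIntegral_mono_on
  · exact integrableOn_phi z
  · exact integrableOn_aux hz 1 15 6 (by
      intro t ht
      have := bound6 t ht
      have e2 : (1:ℝ) + 15/t^6 = -((-1) + (-15)/t^6) := by ring
      rw [e2, abs_neg]; exact this)
  · exact measurableSet_Ioi
  · intro t ht
    have h2t : (2:ℝ) ≤ t := le_trans hz (le_of_lt (mem_Ioi.mp ht))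
    have hpos : (0:ℝ) < 15 / t ^ 6 := by positivity
    nlinarith [Real.exp_nonneg (-t ^ 2 / 2)]


lemma p1_pos {z : ℝ} (hz : 2 ≤ z) : 0 < 1/z - 1/z^3 := by
  have hz0 : (0:ℝ) < z := by linarith
  have e : 1/z - 1/z^3 = (z^2 - 1)/z^3 := by field_simp
  rw [e]
  apply div_pos (by nlinarith) (by positivity)

lemma p2_pos {z : ℝ} (hz : 2 ≤ z) : 0 < 1/z - 1/z^3 + 3/z^5 := by
  have := p1_pos hz
  have hz0 : (0:ℝ) < z := by linarith
  have : (0:ℝ) < 3/z^5 := by positivity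
  linarith [p1_pos hz]

lemma Sg_pos {z : ℝ} (hz : 2 ≤ z) : 0 < Sg z :=
  lt_of_lt_of_le (mul_pos (Real.exp_pos _) (p1_pos hz)) (g1_le_Sg hz)

lemma condMean_le {z : ℝ} (hz : 2 ≤ z) : condMean z ≤ z / (z^2 - 1) := by
  have hz0 : (0:ℝ) < z := by linarith
  have h1 : Real.exp (-z ^ 2 / 2) / Sg z ≤
      Real.exp (-z ^ 2 / 2) / (Real.exp (-z ^ 2 / 2) * (1/z - 1/z^3)) :=
    div_le_div_of_nonneg_left (Real.exp_nonneg _)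
      (mul_pos (Real.exp_pos _) (p1_pos hz)) (g1_le_Sg hz)
  have h2 : Real.exp (-z ^ 2 / 2) / (Real.exp (-z ^ 2 / 2) * (1/z - 1/z^3))
      = z^3 / (z^2 - 1) := by
    have hne := Real.exp_ne_zero (-z^2/2)
    have hzne : z ≠ 0 := ne_of_gt hz0
    have h21 : z^2 - 1 ≠ 0 := by nlinarith
    rw [div_eq_div_iff (ne_of_gt (mul_pos (Real.exp_pos _) (p1_pos hz))) (show z^2-1 ≠ 0 by nlinarith)]
    field_simp
  have h3 : z^3 / (z^2-1) - z = z / (z^2 - 1) := by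
    rw [div_sub' (by nlinarith), div_eq_div_iff (by nlinarith) (by nlinarith)]
    ring
  unfold condMean
  have : (∫ t in Set.Ioi z, Real.exp (-t ^ 2 / 2)) = Sg z := rfl
  rw [this]
  linarith [h1, h2.le, h2.ge]

lemma condMean_ge {z : ℝ} (hz : 2 ≤ z) :
    (z^3 - 3*z) / (z^4 - z^2 + 3) ≤ condMean z := by
  have hz0 : (0:ℝ) < z := by linarith
  have hg2pos : 0 < Real.exp (-z ^ 2 / 2) * (1/z - 1/z^3 + 3/z^5) :=
    mul_pos (Real.exp_pos _) (p2_pos hz)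
  have h1 : Real.exp (-z ^ 2 / 2) / (Real.exp (-z ^ 2 / 2) * (1/z - 1/z^3 + 3/z^5))
      ≤ Real.exp (-z ^ 2 / 2) / Sg z :=
    div_le_div_of_nonneg_left (Real.exp_nonneg _) (Sg_pos hz) (Sg_le_g2 hz)
  have hd : (0:ℝ) < z^4 - z^2 + 3 := by nlinarith [sq_nonneg (z^2 - 1)]
  have h2 : Real.exp (-z ^ 2 / 2) / (Real.exp (-z ^ 2 / 2) * (1/z - 1/z^3 + 3/z^5))
      = z^5 / (z^4 - z^2 + 3) := by
    have hne := Real.exp_ne_zero (-z^2/2)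
    have hzne : z ≠ 0 := ne_of_gt hz0
    rw [div_eq_div_iff (ne_of_gt (mul_pos (Real.exp_pos _) (p2_pos hz))) (ne_of_gt hd)]
    field_simp
  have h3 : z^5 / (z^4 - z^2 + 3) - z = (z^3 - 3*z) / (z^4 - z^2 + 3) := by
    rw [div_sub' (by nlinarith), div_eq_div_iff (by nlinarith) (by nlinarith)]
    ring
  unfold condMean
  have : (∫ t in Set.Ioi z, Real.exp (-t ^ 2 / 2)) = Sg z := rfl
  rw [this]
  linarith [h1, h2.le, h2.ge]

lemma tendsto_zu : Tendsto (fun z : ℝ => z * (z / (z^2 - 1))) atTop (𝓝 1) := by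
  have h : Tendsto (fun z : ℝ => (1 - (z⁻¹)^2)⁻¹) atTop (𝓝 1) := by
    have h1 : Tendsto (fun z : ℝ => 1 - (z⁻¹)^2) atTop (𝓝 1) := by
      have := (tendsto_inv_atTop_zero (𝕜 := ℝ)).pow 2
      simpa using tendsto_const_nhds.sub this
    simpa using h1.inv₀ one_ne_zero
  apply h.congr'
  filter_upwards [eventually_ge_atTop (2:ℝ)] with z hz
  have hz0 : z ≠ 0 := by positivity
  have h21 : z^2 - 1 ≠ 0 := by nlinarith
  field_simp

lemma tendsto_zl : Tendsto (fun z : ℝ => z * ((z^3 - 3*z) / (z^4 - z^2 + 3))) atTop (𝓝 1) := by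
  have hn : Tendsto (fun z : ℝ => 1 - 3*(z⁻¹)^2) atTop (𝓝 1) := by
    have := ((tendsto_inv_atTop_zero (𝕜 := ℝ)).pow 2).const_mul 3
    simpa using tendsto_const_nhds.sub this
  have hd : Tendsto (fun z : ℝ => 1 - (z⁻¹)^2 + 3*(z⁻¹)^4) atTop (𝓝 1) := by
    have h1 := (tendsto_inv_atTop_zero (𝕜 := ℝ)).pow 2
    have h2 := ((tendsto_inv_atTop_zero (𝕜 := ℝ)).pow 4).const_mul 3
    simpa using (tendsto_const_nhds.sub h1).add h2
  have h := hn.div hd one_ne_zero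
  rw [div_one] at h
  apply h.congr'
  filter_upwards [eventually_ge_atTop (2:ℝ)] with z hz
  have hz0 : z ≠ 0 := by positivity
  have hdd : z^4 - z^2 + 3 ≠ 0 := by nlinarith [sq_nonneg (z^2 - 1)]
  have hC : 1 - (z⁻¹)^2 + 3*(z⁻¹)^4 ≠ 0 := by
    have e3 : 1 - (z⁻¹)^2 + 3*(z⁻¹)^4 = (z^4 - z^2 + 3)/z^4 := by field_simp
    rw [e3]
    exact div_ne_zero hdd (by positivity)
  simp only [Pi.div_apply]
  rw [div_eq_iff hC]
  field_simp
  rw [mul_div_cancel_right₀ _ (by nlinarith [sq_nonneg (z^2 - 1)])]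

lemma tendsto_z_condMean : Tendsto (fun z : ℝ => z * condMean z) atTop (𝓝 1) := by
  apply tendsto_of_tendsto_of_tendsto_of_le_of_le' tendsto_zl tendsto_zu
  · filter_upwards [eventually_ge_atTop (2:ℝ)] with z hz
    exact mul_le_mul_of_nonneg_left (condMean_ge hz) (by linarith)
  · filter_upwards [eventually_ge_atTop (2:ℝ)] with z hz
    exact mul_le_mul_of_nonneg_left (condMean_le hz) (by linarith)

lemma tendsto_condMean_zero : Tendsto condMean atTop (𝓝 0) := by
  have h := (tendsto_inv_atTop_zero (𝕜 := ℝ)).mul tendsto_z_condMean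
  rw [zero_mul] at h
  apply h.congr'
  filter_upwards [eventually_ge_atTop (2:ℝ)] with z hz
  have hz0 : z ≠ 0 := by positivity
  field_simp

lemma condMean_nonneg {z : ℝ} (hz : 2 ≤ z) : 0 ≤ condMean z := by
  refine le_trans ?_ (condMean_ge hz)
  have h4 : (4:ℝ) ≤ z^2 := by nlinarith
  apply div_nonneg (by nlinarith) (by nlinarith [sq_nonneg (z^2 - 1)])


lemma survival_eq (z a : ℝ) :
    ∫ t in Ioi a, condDens z t = Sg (a + z) / Sg z := by
  unfold condDens
  rw [integral_div]
  congr 1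
  have h := (measurePreserving_add_right (volume : Measure ℝ) z).setIntegral_preimage_emb
    (measurableEmbedding_addRight z) (fun u => Real.exp (-u ^ 2 / 2)) (Ioi (a + z))
  have hpre : (fun x : ℝ => x + z) ⁻¹' Ioi (a + z) = Ioi a := by
    rw [preimage_add_const_Ioi]
    simp
  rw [hpre] at h
  exact h

set_option maxHeartbeats 2000000 in
lemma exp_split {z b : ℝ} :
    Real.exp (-(b+z)^2/2) = Real.exp (-z^2/2) * Real.exp (-(z*b) - b^2/2) := by
  rw [← Real.exp_add]; ring_nf

lemma ratio_eq_upper {z b : ℝ} (hz : 2 ≤ z) (hb : 0 ≤ b) :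
    (Real.exp (-(b+z)^2/2) * (1/(b+z) - 1/(b+z)^3 + 3/(b+z)^5)) /
      (Real.exp (-z^2/2) * (1/z - 1/z^3))
    = Real.exp (-(z*b) - b^2/2) *
      (((b+z)⁻¹/z⁻¹) * ((1 - ((b+z)⁻¹)^2 + 3*((b+z)⁻¹)^4)/(1 - (z⁻¹)^2))) := by
  have hz0 : (0:ℝ) < z := by linarith
  have hbz : (0:ℝ) < b + z := by linarith
  have hzne : z ≠ 0 := ne_of_gt hz0
  have hbzne : b + z ≠ 0 := ne_of_gt hbz
  have he1 := Real.exp_ne_zero (-z^2/2)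
  rw [exp_split, mul_assoc, mul_div_mul_left _ _ he1, mul_div_assoc]
  congr 1
  have e2 : 1/(b+z) - 1/(b+z)^3 + 3/(b+z)^5
      = (b+z)⁻¹ * (1 - ((b+z)⁻¹)^2 + 3*((b+z)⁻¹)^4) := by
    field_simp
  have e1 : 1/z - 1/z^3 = z⁻¹ * (1 - (z⁻¹)^2) := by
    field_simp
  rw [e2, e1, ← div_mul_div_comm]

lemma ratio_eq_lower {z b : ℝ} (hz : 2 ≤ z) (hb : 0 ≤ b) :
    (Real.exp (-(b+z)^2/2) * (1/(b+z) - 1/(b+z)^3)) /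
      (Real.exp (-z^2/2) * (1/z - 1/z^3 + 3/z^5))
    = Real.exp (-(z*b) - b^2/2) *
      (((b+z)⁻¹/z⁻¹) * ((1 - ((b+z)⁻¹)^2)/(1 - (z⁻¹)^2 + 3*(z⁻¹)^4))) := by
  have hz0 : (0:ℝ) < z := by linarith
  have hbz : (0:ℝ) < b + z := by linarith
  have hzne : z ≠ 0 := ne_of_gt hz0
  have hbzne : b + z ≠ 0 := ne_of_gt hbz
  have he1 := Real.exp_ne_zero (-z^2/2)
  rw [exp_split, mul_assoc, mul_div_mul_left _ _ he1, mul_div_assoc]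
  congr 1
  have e2 : 1/(b+z) - 1/(b+z)^3 = (b+z)⁻¹ * (1 - ((b+z)⁻¹)^2) := by
    field_simp
  have e1 : 1/z - 1/z^3 + 3/z^5 = z⁻¹ * (1 - (z⁻¹)^2 + 3*(z⁻¹)^4) := by
    field_simp
  rw [e2, e1, ← div_mul_div_comm]

/-- `X_z / m z` converges in distribution, as `z → ∞`, to the mean-one exponential
variable: the survival functions converge pointwise. -/
theorem condDens_rescaled_tendsto_exponential :
    ∀ x : ℝ, 0 ≤ x →
      Tendsto (fun z : ℝ => ∫ t in Set.Ioi (x * condMean z), condDens z t)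
        atTop (nhds (Real.exp (-x))) := by
  intro x hx
  set a : ℝ → ℝ := fun z => x * condMean z with ha
  -- basic limits
  have ha0 : Tendsto a atTop (𝓝 0) := by
    have := tendsto_condMean_zero.const_mul x
    simpa using this
  have hza : Tendsto (fun z => z * a z) atTop (𝓝 x) := by
    have h := tendsto_z_condMean.const_mul x
    rw [mul_one] at h
    apply h.congr (fun z => by simp [ha]; ring)
  have hann : ∀ᶠ z in atTop, 0 ≤ a z := by
    filter_upwards [eventually_ge_atTop (2:ℝ)] with z hz
    exact mul_nonneg hx (condMean_nonneg hz)
  have hplus : Tendsto (fun z => a z + z) atTop atTop := by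
    apply tendsto_atTop_mono' atTop (f₁ := fun z : ℝ => z)
    · filter_upwards [hann] with z h; linarith
    · exact tendsto_id
  have hinvplus : Tendsto (fun z => (a z + z)⁻¹) atTop (𝓝 0) :=
    tendsto_inv_atTop_zero.comp hplus
  have hinv : Tendsto (fun z : ℝ => z⁻¹) atTop (𝓝 0) := tendsto_inv_atTop_zero
  -- exponential factor
  have hE : Tendsto (fun z => Real.exp (-(z * a z) - (a z)^2/2)) atTop
      (𝓝 (Real.exp (-x))) := by
    have harg : Tendsto (fun z => -(z * a z) - (a z)^2/2) atTop (𝓝 (-x)) := by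
      have := (hza.neg).sub ((ha0.pow 2).div_const 2)
      simpa using this
    exact (Real.continuous_exp.tendsto _).comp harg
  -- the z/(z+a) factor
  have hfrac : Tendsto (fun z => (a z + z)⁻¹ / z⁻¹) atTop (𝓝 1) := by
    have h1 : Tendsto (fun z => (1 + a z * z⁻¹)⁻¹) atTop (𝓝 1) := by
      have h0 : Tendsto (fun z => 1 + a z * z⁻¹) atTop (𝓝 1) := by
        have := tendsto_const_nhds (x := (1:ℝ)) (f := atTop).add (ha0.mul hinv)
        simpa using this
      simpa using h0.inv₀ one_ne_zero
    apply h1.congr'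
    filter_upwards [eventually_ge_atTop (2:ℝ), hann] with z hz hb
    have hz0 : (0:ℝ) < z := by linarith
    have hbz : (0:ℝ) < a z + z := by linarith
    rw [eq_div_iff (by positivity)]
    field_simp
    ring
  -- polynomial factors
  have hq1 : Tendsto (fun z : ℝ => 1 - (z⁻¹)^2) atTop (𝓝 1) := by
    have := (hinv.pow 2)
    simpa using tendsto_const_nhds.sub this
  have hq2 : Tendsto (fun z : ℝ => 1 - (z⁻¹)^2 + 3*(z⁻¹)^4) atTop (𝓝 1) := by
    have h1 := (hinv.pow 2)
    have h2 := (hinv.pow 4).const_mul 3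
    simpa using (tendsto_const_nhds.sub h1).add h2
  have hq1p : Tendsto (fun z => 1 - ((a z + z)⁻¹)^2) atTop (𝓝 1) := by
    have := (hinvplus.pow 2)
    simpa using tendsto_const_nhds.sub this
  have hq2p : Tendsto (fun z => 1 - ((a z + z)⁻¹)^2 + 3*((a z + z)⁻¹)^4) atTop (𝓝 1) := by
    have h1 := (hinvplus.pow 2)
    have h2 := (hinvplus.pow 4).const_mul 3
    simpa using (tendsto_const_nhds.sub h1).add h2
  -- bound function limits
  have hU : Tendsto (fun z => Real.exp (-(z * a z) - (a z)^2/2) *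
      (((a z + z)⁻¹/z⁻¹) * ((1 - ((a z + z)⁻¹)^2 + 3*((a z + z)⁻¹)^4)/(1 - (z⁻¹)^2))))
      atTop (𝓝 (Real.exp (-x))) := by
    have := hE.mul (hfrac.mul (hq2p.div hq1 one_ne_zero))
    simpa using this
  have hL : Tendsto (fun z => Real.exp (-(z * a z) - (a z)^2/2) *
      (((a z + z)⁻¹/z⁻¹) * ((1 - ((a z + z)⁻¹)^2)/(1 - (z⁻¹)^2 + 3*(z⁻¹)^4))))
      atTop (𝓝 (Real.exp (-x))) := by
    have := hE.mul (hfrac.mul (hq1p.div hq2 one_ne_zero))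
    simpa using this
  -- sandwich
  apply tendsto_of_tendsto_of_tendsto_of_le_of_le' hL hU
  · -- lower bound
    filter_upwards [eventually_ge_atTop (2:ℝ), hann] with z hz hb
    rw [show x * condMean z = a z from rfl, survival_eq z (a z),
      ← ratio_eq_lower hz hb]
    have hbz2 : (2:ℝ) ≤ a z + z := by linarith
    apply div_le_div₀ (le_trans (le_of_lt (mul_pos (Real.exp_pos _) (p1_pos hbz2)))
        (g1_le_Sg hbz2)) (g1_le_Sg hbz2) (Sg_pos hz) (Sg_le_g2 hz)
  · -- upper bound
    filter_upwards [eventually_ge_atTop (2:ℝ), hann] with z hz hb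
    rw [show x * condMean z = a z from rfl, survival_eq z (a z),
      ← ratio_eq_upper hz hb]
    have hbz2 : (2:ℝ) ≤ a z + z := by linarith
    apply div_le_div₀ (le_of_lt (mul_pos (Real.exp_pos _) (p2_pos hbz2)))
      (Sg_le_g2 hbz2) (mul_pos (Real.exp_pos _) (p1_pos hz)) (g1_le_Sg hz)
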